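/- Suppose α satisfies Ncond for the aggregated matching graph G_x=(V,ξ), and let (u,v) be a pair of distinct non-adjacent vertices of G_x with u≠x and v≠x. Let Ḡ_x and Ḡ_yz denote the graphs obtained from G_x and G_yz respectively by adding the edge (u,v). If a Braess paradox holds for G_x, i.e., Q(Ḡ_x, α) > Q(G_x, α), then a Braess paradox holds for the decomposition matching graph: Q(Ḡ_yz, β) > Q(G_yz, β). -/

import Mathlib

open Classical Finset

noncomputable section

def nbr {V : Type} [Fintype V] (G : SimpleGraph V) (S : Finset V) : Finset V :=
  Finset.univ.filter fun j => ∃ i ∈ S, G.Adj i j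

def aSum {V : Type} (α : V → ℝ) (S : Finset V) : ℝ := ∑ i ∈ S, α i

def IsIndep {V : Type} (G : SimpleGraph V) (I : Finset V) : Prop :=
  I.Nonempty ∧ ∀ i ∈ I, ∀ j ∈ I, ¬ G.Adj i j

def indepSets {V : Type} [Fintype V] (G : SimpleGraph V) : Finset (Finset V) :=
  Finset.univ.filter fun I => IsIndep G I

def Ncond {V : Type} [Fintype V] (G : SimpleGraph V) (α : V → ℝ) : Prop :=
  ∀ I ∈ indepSets G, aSum α I < aSum α (nbr G I)

def Tlist {V : Type} [Fintype V] [DecidableEq V] (G : SimpleGraph V) (α : V → ℝ) :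
    List V → Finset V → ℝ
  | [], _ => 1
  | i :: l, P =>
      α i / (aSum α (nbr G (insert i P)) - aSum α (insert i P)) * Tlist G α l (insert i P)

def Erat {V : Type} [Fintype V] [DecidableEq V] (G : SimpleGraph V) (α : V → ℝ) :
    List V → Finset V → ℝ
  | [], _ => 0
  | i :: l, P =>
      aSum α (nbr G (insert i P)) / (aSum α (nbr G (insert i P)) - aSum α (insert i P)) +
        Erat G α l (insert i P)

def TI {V : Type} [Fintype V] [DecidableEq V] (G : SimpleGraph V) (α : V → ℝ) (I : Finset V) : ℝ :=
  ∑ l ∈ I.toList.permutations.toFinset, Tlist G α l ∅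

def EI {V : Type} [Fintype V] [DecidableEq V] (G : SimpleGraph V) (α : V → ℝ) (I : Finset V) : ℝ :=
  ∑ l ∈ I.toList.permutations.toFinset, Erat G α l ∅ * Tlist G α l ∅

def meanQ {V : Type} [Fintype V] [DecidableEq V] (G : SimpleGraph V) (α : V → ℝ) : ℝ :=
  (1 + ∑ I ∈ indepSets G, TI G α I)⁻¹ * ∑ I ∈ indepSets G, EI G α I

def IsWord {V : Type} (G : SimpleGraph V) (w : List V) : Prop :=
  w.Pairwise fun a b => ¬ G.Adj a b

def piHatAux {V : Type} [Fintype V] [DecidableEq V] (G : SimpleGraph V) (α : V → ℝ) :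
    List V → Finset V → ℝ
  | [], _ => 1
  | i :: l, P => α i / aSum α (nbr G (insert i P)) * piHatAux G α l (insert i P)

def piHat {V : Type} [Fintype V] [DecidableEq V] (G : SimpleGraph V) (α : V → ℝ) (w : List V) : ℝ :=
  piHatAux G α w ∅

def addEdge {V : Type} (G : SimpleGraph V) (u v : V) : SimpleGraph V :=
  G ⊔ SimpleGraph.fromEdgeSet {s(u, v)}

end

def psiMap {V : Type} (x : V) : V ⊕ Unit → V := Sum.elim id fun _ => x

def Gyz {V : Type} (G : SimpleGraph V) (x : V) : SimpleGraph (V ⊕ Unit) :=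
  SimpleGraph.comap (psiMap x) G

noncomputable def betaArr {V : Type} [DecidableEq V] (α : V → ℝ) (x : V) (by_ bz : ℝ) :
    V ⊕ Unit → ℝ :=
  Sum.elim (fun v => if v = x then by_ else α v) fun _ => bz

noncomputable section

variable {V : Type} [Fintype V] [DecidableEq V]

def Dq (G : SimpleGraph V) (α : V → ℝ) (S : Finset V) : ℝ :=
  aSum α (nbr G S) - aSum α S

def Nq (G : SimpleGraph V) (α : V → ℝ) (S : Finset V) : ℝ := aSum α (nbr G S)

def Tset (G : SimpleGraph V) (α : V → ℝ) (I : Finset V) : ℝ :=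
  if I = ∅ then 1 else
    (∑ i ∈ I.attach, α i.1 * Tset G α (I.erase i.1)) / Dq G α I
termination_by I.card
decreasing_by exact Finset.card_erase_lt_of_mem i.2

def Eset (G : SimpleGraph V) (α : V → ℝ) (I : Finset V) : ℝ :=
  if I = ∅ then 0 else
    (∑ i ∈ I.attach,
      α i.1 * (Eset G α (I.erase i.1) + Nq G α I / Dq G α I * Tset G α (I.erase i.1))) / Dq G α I
termination_by I.card
decreasing_by exact Finset.card_erase_lt_of_mem i.2

lemma Tset_empty (G : SimpleGraph V) (α : V → ℝ) : Tset G α ∅ = 1 := by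
  rw [Tset]; simp

lemma Eset_empty (G : SimpleGraph V) (α : V → ℝ) : Eset G α ∅ = 0 := by
  rw [Eset]; simp

lemma Tset_eq (G : SimpleGraph V) (α : V → ℝ) {I : Finset V} (hI : I ≠ ∅) :
    Tset G α I = (∑ i ∈ I, α i * Tset G α (I.erase i)) / Dq G α I := by
  rw [Tset, if_neg hI, ← Finset.sum_attach I (fun i => α i * Tset G α (I.erase i))]

lemma Eset_eq (G : SimpleGraph V) (α : V → ℝ) {I : Finset V} (hI : I ≠ ∅) :
    Eset G α I = (∑ i ∈ I,
      α i * (Eset G α (I.erase i) + Nq G α I / Dq G α I * Tset G α (I.erase i))) / Dq G α I := by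
  rw [Eset, if_neg hI, ← Finset.sum_attach I
    (fun i => α i * (Eset G α (I.erase i) + Nq G α I / Dq G α I * Tset G α (I.erase i)))]

lemma Tlist_append (G : SimpleGraph V) (α : V → ℝ) (i : V) (l : List V) :
    ∀ (P : Finset V),
    Tlist G α (l ++ [i]) P =
      Tlist G α l P * (α i / Dq G α (insert i (P ∪ l.toFinset))) := by
  induction l with
  | nil => intro P; simp [Tlist, Dq]
  | cons j l ih =>
    intro P
    have h : insert j P ∪ l.toFinset = P ∪ (j :: l).toFinset := by
      rw [List.toFinset_cons, Finset.insert_union, Finset.union_insert]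
    rw [List.cons_append]
    simp only [Tlist]
    rw [ih (insert j P), h]; ring

lemma Erat_append (G : SimpleGraph V) (α : V → ℝ) (i : V) (l : List V) :
    ∀ (P : Finset V),
    Erat G α (l ++ [i]) P =
      Erat G α l P + Nq G α (insert i (P ∪ l.toFinset)) / Dq G α (insert i (P ∪ l.toFinset)) := by
  induction l with
  | nil => intro P; simp [Erat, Dq, Nq]
  | cons j l ih =>
    intro P
    have h : insert j P ∪ l.toFinset = P ∪ (j :: l).toFinset := by
      rw [List.toFinset_cons, Finset.insert_union, Finset.union_insert]
    rw [List.cons_append]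
    simp only [Erat]
    rw [ih (insert j P), h]; ring

lemma mem_perms {I : Finset V} {l : List V} :
    l ∈ I.toList.permutations.toFinset ↔ (l.Nodup ∧ l.toFinset = I) := by
  simp only [List.mem_toFinset, List.mem_permutations]
  constructor
  · intro h
    refine ⟨h.nodup_iff.2 (Finset.nodup_toList I), ?_⟩
    ext a; simp [List.mem_toFinset, h.mem_iff, Finset.mem_toList]
  · rintro ⟨h1, h2⟩
    refine List.perm_of_nodup_nodup_toFinset_eq h1 (Finset.nodup_toList I) ?_
    rw [h2]; ext a; simp [Finset.mem_toList]

lemma perms_decomp (I : Finset V) (hI : I ≠ ∅) :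
    I.toList.permutations.toFinset =
      I.biUnion (fun i => ((I.erase i).toList.permutations.toFinset).image (· ++ [i])) := by
  ext l
  simp only [Finset.mem_biUnion, Finset.mem_image, mem_perms]
  constructor
  · intro ⟨hnd, hfin⟩
    have hne : l ≠ [] := by
      intro h; apply hI; rw [← hfin, h]; simp
    refine ⟨l.getLast hne, ?_, l.dropLast, ⟨?_, ?_⟩, List.dropLast_append_getLast hne⟩
    · rw [← hfin]; exact List.mem_toFinset.2 (List.getLast_mem hne)
    · exact hnd.sublist (List.dropLast_sublist l)
    · have hl : l = l.dropLast ++ [l.getLast hne] := (List.dropLast_append_getLast hne).symm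
      have hnotmem : l.getLast hne ∉ l.dropLast := by
        intro hm
        have := hnd
        rw [hl] at this
        simp only [List.nodup_append] at this
        exact this.2.2 _ hm _ (by simp) rfl
      ext a
      simp only [List.mem_toFinset, Finset.mem_erase]
      constructor
      · intro ha
        refine ⟨?_, ?_⟩
        · rintro rfl; exact hnotmem ha
        · rw [← hfin, hl]; simp [ha]
      · rintro ⟨hane, ha⟩
        rw [← hfin, hl] at ha
        simp only [List.toFinset_append, Finset.mem_union, List.mem_toFinset,
          List.toFinset_cons, List.toFinset_nil] at ha
        rcases ha with h | h
        · exact h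
        · simp at h; exact absurd h hane
  · rintro ⟨i, hi, l', ⟨hnd', hfin'⟩, rfl⟩
    have hnotmem : i ∉ l' := by
      intro hm
      have : i ∈ I.erase i := hfin' ▸ List.mem_toFinset.2 hm
      simp at this
    constructor
    · rw [List.nodup_append]
      refine ⟨hnd', List.nodup_singleton i, ?_⟩
      intro a ha b hb hab
      simp only [List.mem_singleton] at hb
      subst hab; subst hb; exact hnotmem ha
    · rw [List.toFinset_append, hfin']
      simp only [List.toFinset_cons, List.toFinset_nil, insert_empty_eq]
      rw [Finset.union_comm, ← Finset.insert_eq, Finset.insert_erase hi]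

lemma sum_perms_decomp (I : Finset V) (hI : I ≠ ∅) (f : List V → ℝ) :
    ∑ l ∈ I.toList.permutations.toFinset, f l =
      ∑ i ∈ I, ∑ l' ∈ (I.erase i).toList.permutations.toFinset, f (l' ++ [i]) := by
  rw [perms_decomp I hI, Finset.sum_biUnion]
  · refine Finset.sum_congr rfl fun i _ => ?_
    rw [Finset.sum_image]
    intro a _ b _ h
    exact List.append_cancel_right h
  · intro i hi j hj hij
    rw [Function.onFun, Finset.disjoint_left]
    intro s hs1 hs2
    simp only [Finset.mem_image] at hs1 hs2
    obtain ⟨a, _, ha⟩ := hs1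
    obtain ⟨b, _, hb⟩ := hs2
    apply hij
    have h := ha.trans hb.symm
    have h2 := (List.append_inj' h (by simp)).2
    simpa using h2

lemma TI_eq_Tset (G : SimpleGraph V) (α : V → ℝ) (I : Finset V) : TI G α I = Tset G α I := by
  induction I using Finset.strongInductionOn with
  | _ I ih =>
    by_cases hI : I = ∅
    · subst hI
      simp [TI, Tset_empty, Tlist, Finset.toList_empty]
    · rw [TI, sum_perms_decomp I hI]
      have key : ∀ i ∈ I,
          (∑ l' ∈ (I.erase i).toList.permutations.toFinset, Tlist G α (l' ++ [i]) ∅)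
            = TI G α (I.erase i) * (α i / Dq G α I) := by
        intro i hi
        rw [TI, Finset.sum_mul]
        refine Finset.sum_congr rfl fun l' hl' => ?_
        rw [Tlist_append]
        have hfin : l'.toFinset = I.erase i := (mem_perms.1 hl').2
        rw [Finset.empty_union, hfin, Finset.insert_erase hi]
      rw [Finset.sum_congr rfl key, Tset_eq G α hI, Finset.sum_div]
      refine Finset.sum_congr rfl fun i hi => ?_
      rw [ih (I.erase i) (Finset.erase_ssubset hi)]
      ring

lemma EI_eq_Eset (G : SimpleGraph V) (α : V → ℝ) (I : Finset V) : EI G α I = Eset G α I := by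
  induction I using Finset.strongInductionOn with
  | _ I ih =>
    by_cases hI : I = ∅
    · subst hI
      simp [EI, Eset_empty, Erat, Finset.toList_empty]
    · rw [EI, sum_perms_decomp I hI]
      have key : ∀ i ∈ I,
          (∑ l' ∈ (I.erase i).toList.permutations.toFinset,
              Erat G α (l' ++ [i]) ∅ * Tlist G α (l' ++ [i]) ∅)
            = (EI G α (I.erase i) + Nq G α I / Dq G α I * TI G α (I.erase i)) * (α i / Dq G α I) := by
        intro i hi
        rw [EI, TI, Finset.mul_sum, add_mul, Finset.sum_mul, Finset.sum_mul,
          ← Finset.sum_add_distrib]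
        refine Finset.sum_congr rfl fun l' hl' => ?_
        rw [Tlist_append, Erat_append]
        have hfin : l'.toFinset = I.erase i := (mem_perms.1 hl').2
        rw [Finset.empty_union, hfin, Finset.insert_erase hi]
        ring
      rw [Finset.sum_congr rfl key, Eset_eq G α hI, Finset.sum_div]
      refine Finset.sum_congr rfl fun i hi => ?_
      rw [ih (I.erase i) (Finset.erase_ssubset hi), TI_eq_Tset]
      ring

section Decomp

variable (G : SimpleGraph V) (α : V → ℝ) (x : V) (by_ bz : ℝ)

lemma nbr_Gyz (J : Finset (V ⊕ Unit)) :
    nbr (Gyz G x) J =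
      Finset.univ.filter fun w => psiMap x w ∈ nbr G (J.image (psiMap x)) := by
  ext w
  simp only [nbr, Finset.mem_filter, Finset.mem_univ, true_and, Gyz,
    SimpleGraph.comap_adj, Finset.mem_image]
  constructor
  · rintro ⟨j, hj, hadj⟩
    exact ⟨psiMap x j, ⟨j, hj, rfl⟩, hadj⟩
  · rintro ⟨i, ⟨j, hj, rfl⟩, hadj⟩
    exact ⟨j, hj, hadj⟩

lemma aSum_beta_filter (hyz : by_ + bz = α x) (T : Finset V) :
    aSum (betaArr α x by_ bz) (Finset.univ.filter fun w => psiMap x w ∈ T) = aSum α T := by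
  rw [aSum, Finset.sum_filter, Fintype.sum_sum_type]
  simp only [betaArr, psiMap, Sum.elim_inl, Sum.elim_inr, id_eq]
  simp only [Finset.univ_unique, Finset.sum_singleton]
  by_cases hx : x ∈ T
  · simp only [hx, ↓reduceIte]
    have h1 : ∑ a : V, (if a ∈ T then if a = x then by_ else α a else 0)
        = ∑ a ∈ T, (if a = x then by_ else α a) := by
      rw [Finset.sum_ite_mem, Finset.univ_inter]
    erw [h1]; rw [← Finset.insert_erase hx, Finset.sum_insert (Finset.notMem_erase _ _),
      if_pos rfl]
    have h2 : ∑ a ∈ T.erase x, (if a = x then by_ else α a) = ∑ a ∈ T.erase x, α a := by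
      refine Finset.sum_congr rfl fun a ha => ?_
      rw [if_neg (Finset.ne_of_mem_erase ha)]
    rw [h2, aSum, ← Finset.insert_erase hx, Finset.sum_insert (Finset.notMem_erase _ _)]
    linarith
  · simp only [hx, ↓reduceIte]
    have h1 : ∑ a : V, (if a ∈ T then if a = x then by_ else α a else 0)
        = ∑ a ∈ T, (if a = x then by_ else α a) := by
      rw [Finset.sum_ite_mem, Finset.univ_inter]
    erw [h1]; rw [aSum, add_zero]
    refine Finset.sum_congr rfl fun a ha => ?_
    rw [if_neg]
    rintro rfl; exact hx ha

lemma Nq_Gyz (hyz : by_ + bz = α x) (J : Finset (V ⊕ Unit)) :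
    Nq (Gyz G x) (betaArr α x by_ bz) J = Nq G α (J.image (psiMap x)) := by
  rw [Nq, Nq, nbr_Gyz, aSum_beta_filter α x by_ bz hyz]

lemma image_psi_image_inl (S : Finset V) :
    (S.image (Sum.inl : V → V ⊕ Unit)).image (psiMap x) = S := by
  ext a
  simp [psiMap]

lemma aSum_image_inl {S : Finset V} (hx : x ∉ S) :
    aSum (betaArr α x by_ bz) (S.image Sum.inl) = aSum α S := by
  rw [aSum, Finset.sum_image (fun a _ b _ h => Sum.inl_injective h)]
  refine Finset.sum_congr rfl fun i hi => ?_
  simp only [betaArr, Sum.elim_inl]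
  rw [if_neg]
  rintro rfl; exact hx hi

lemma inlx_not_mem {S : Finset V} (hx : x ∉ S) :
    (Sum.inl x : V ⊕ Unit) ∉ S.image Sum.inl := by
  simp only [Finset.mem_image, not_exists]
  rintro i ⟨hi, h⟩
  exact hx ((Sum.inl_injective h) ▸ hi)

lemma inr_not_mem_inl (S : Finset V) : (Sum.inr () : V ⊕ Unit) ∉ S.image Sum.inl := by
  simp

lemma inr_not_mem_insert {S : Finset V} :
    (Sum.inr () : V ⊕ Unit) ∉ insert (Sum.inl x) (S.image Sum.inl) := by
  simp

end Decomp

-- ===== lifted sets and their Dq =====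

section Split

variable {G : SimpleGraph V} {α : V → ℝ} {x : V} {by_ bz : ℝ}

def JY (x : V) (S : Finset V) : Finset (V ⊕ Unit) := insert (Sum.inl x) (S.image Sum.inl)
def JZ (S : Finset V) : Finset (V ⊕ Unit) := insert (Sum.inr ()) (S.image Sum.inl)
def JYZ (x : V) (S : Finset V) : Finset (V ⊕ Unit) := insert (Sum.inr ()) (JY x S)

lemma image_psi_JY (S : Finset V) : (JY x S).image (psiMap x) = insert x S := by
  rw [JY, Finset.image_insert, image_psi_image_inl]
  rfl

lemma image_psi_JZ (S : Finset V) : (JZ S).image (psiMap x) = insert x S := by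
  rw [JZ, Finset.image_insert, image_psi_image_inl]
  rfl

lemma image_psi_JYZ (S : Finset V) : (JYZ x S).image (psiMap x) = insert x S := by
  rw [JYZ, Finset.image_insert, image_psi_JY]
  show insert x (insert x S) = insert x S
  rw [Finset.insert_idem]

lemma inr_not_mem_JY (S : Finset V) : (Sum.inr () : V ⊕ Unit) ∉ JY x S := by
  rw [JY]; exact inr_not_mem_insert x

lemma aSum_JY (hx : x ∉ S) : aSum (betaArr α x by_ bz) (JY x S) = by_ + aSum α S := by
  rw [JY, aSum, Finset.sum_insert (inlx_not_mem x hx), ← aSum, aSum_image_inl α x by_ bz hx]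
  simp [betaArr]

lemma aSum_JZ (hx : x ∉ S) : aSum (betaArr α x by_ bz) (JZ S) = bz + aSum α S := by
  rw [JZ, aSum, Finset.sum_insert (inr_not_mem_inl S), ← aSum, aSum_image_inl α x by_ bz hx]
  simp [betaArr]

lemma aSum_JYZ (hx : x ∉ S) :
    aSum (betaArr α x by_ bz) (JYZ x S) = bz + (by_ + aSum α S) := by
  rw [JYZ, aSum, Finset.sum_insert (inr_not_mem_JY S), ← aSum, aSum_JY hx]
  simp [betaArr]

lemma Dq_image (hyz : by_ + bz = α x) (hx : x ∉ S) :
    Dq (Gyz G x) (betaArr α x by_ bz) (S.image Sum.inl) = Dq G α S := by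
  rw [Dq, Dq, ← Nq, ← Nq, Nq_Gyz G α x by_ bz hyz, image_psi_image_inl,
    aSum_image_inl α x by_ bz hx]

lemma Nq_JY (hyz : by_ + bz = α x) (S : Finset V) :
    Nq (Gyz G x) (betaArr α x by_ bz) (JY x S) = Nq G α (insert x S) := by
  rw [Nq_Gyz G α x by_ bz hyz, image_psi_JY]

lemma Nq_JZ (hyz : by_ + bz = α x) (S : Finset V) :
    Nq (Gyz G x) (betaArr α x by_ bz) (JZ S) = Nq G α (insert x S) := by
  rw [Nq_Gyz G α x by_ bz hyz, image_psi_JZ]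

lemma Nq_JYZ (hyz : by_ + bz = α x) (S : Finset V) :
    Nq (Gyz G x) (betaArr α x by_ bz) (JYZ x S) = Nq G α (insert x S) := by
  rw [Nq_Gyz G α x by_ bz hyz, image_psi_JYZ]

lemma Dq_JY (hyz : by_ + bz = α x) (hx : x ∉ S) :
    Dq (Gyz G x) (betaArr α x by_ bz) (JY x S) = Dq G α (insert x S) + bz := by
  rw [Dq, Dq, ← Nq, ← Nq, Nq_JY hyz, aSum_JY hx]
  have h : aSum α (insert x S) = α x + aSum α S := by rw [aSum, Finset.sum_insert hx]; rfl
  rw [h]; linarith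

lemma Dq_JZ (hyz : by_ + bz = α x) (hx : x ∉ S) :
    Dq (Gyz G x) (betaArr α x by_ bz) (JZ S) = Dq G α (insert x S) + by_ := by
  rw [Dq, Dq, ← Nq, ← Nq, Nq_JZ hyz, aSum_JZ hx]
  have h : aSum α (insert x S) = α x + aSum α S := by rw [aSum, Finset.sum_insert hx]; rfl
  rw [h]; linarith

lemma Dq_JYZ (hyz : by_ + bz = α x) (hx : x ∉ S) :
    Dq (Gyz G x) (betaArr α x by_ bz) (JYZ x S) = Dq G α (insert x S) := by
  rw [Dq, Dq, ← Nq, ← Nq, Nq_JYZ hyz, aSum_JYZ hx]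
  have h : aSum α (insert x S) = α x + aSum α S := by rw [aSum, Finset.sum_insert hx]; rfl
  rw [h]; linarith

-- ===== invariance for independent sets avoiding x =====

lemma TsetA (hyz : by_ + bz = α x) : ∀ S : Finset V, x ∉ S →
    Tset (Gyz G x) (betaArr α x by_ bz) (S.image Sum.inl) = Tset G α S := by
  intro S
  induction S using Finset.strongInductionOn with
  | _ S ih =>
    intro hx
    by_cases hS : S = ∅
    · subst hS; simp [Tset_empty]
    · have himg : S.image Sum.inl ≠ (∅ : Finset (V ⊕ Unit)) := by
        simp [Finset.image_eq_empty, hS]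
      rw [Tset_eq _ _ himg, Tset_eq _ _ hS, Dq_image hyz hx,
        Finset.sum_image (fun a _ b _ h => Sum.inl_injective h)]
      congr 1
      refine Finset.sum_congr rfl fun i hi => ?_
      rw [← Finset.image_erase Sum.inl_injective,
        ih (S.erase i) (Finset.erase_ssubset hi) (fun h => hx (Finset.mem_of_mem_erase h))]
      congr 1
      simp only [betaArr, Sum.elim_inl]
      rw [if_neg]; rintro rfl; exact hx hi

lemma EsetA (hyz : by_ + bz = α x) : ∀ S : Finset V, x ∉ S →
    Eset (Gyz G x) (betaArr α x by_ bz) (S.image Sum.inl) = Eset G α S := by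
  intro S
  induction S using Finset.strongInductionOn with
  | _ S ih =>
    intro hx
    by_cases hS : S = ∅
    · subst hS; simp [Eset_empty]
    · have himg : S.image Sum.inl ≠ (∅ : Finset (V ⊕ Unit)) := by
        simp [Finset.image_eq_empty, hS]
      rw [Eset_eq _ _ himg, Eset_eq _ _ hS, Dq_image hyz hx, Nq_Gyz G α x by_ bz hyz,
        image_psi_image_inl,
        Finset.sum_image (fun a _ b _ h => Sum.inl_injective h)]
      congr 1
      refine Finset.sum_congr rfl fun i hi => ?_
      have hxe : x ∉ S.erase i := fun h => hx (Finset.mem_of_mem_erase h)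
      rw [← Finset.image_erase Sum.inl_injective,
        ih (S.erase i) (Finset.erase_ssubset hi) hxe,
        TsetA hyz (S.erase i) hxe]
      congr 1
      simp only [betaArr, Sum.elim_inl]
      rw [if_neg]; rintro rfl; exact hx hi

end Split

-- ===== the splitting identity =====

section SplitMain

variable {G : SimpleGraph V} {α : V → ℝ} {x : V} {by_ bz : ℝ}

lemma inl_ne_of_mem {S : Finset V} (hx : x ∉ S) {i : V} (hi : i ∈ S) :
    (Sum.inl x : V ⊕ Unit) ≠ Sum.inl i := by
  intro hcon
  apply hx
  rw [Sum.inl_injective hcon]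
  exact hi

lemma beta_inl_of_mem {S : Finset V} (hx : x ∉ S) {i : V} (hi : i ∈ S) :
    betaArr α x by_ bz (Sum.inl i) = α i := by
  simp only [betaArr, Sum.elim_inl]
  rw [if_neg]
  rintro rfl; exact hx hi

lemma sum_split_JY {S : Finset V} (hx : x ∉ S) (f : Finset (V ⊕ Unit) → ℝ) :
    ∑ w ∈ JY x S, betaArr α x by_ bz w * f ((JY x S).erase w)
      = by_ * f (S.image Sum.inl) + ∑ i ∈ S, α i * f (JY x (S.erase i)) := by
  have h1 : JY x S = insert (Sum.inl x) (S.image Sum.inl) := rfl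
  rw [h1, Finset.sum_insert (inlx_not_mem x hx), Finset.erase_insert (inlx_not_mem x hx)]
  have hβx : betaArr α x by_ bz (Sum.inl x) = by_ := by simp [betaArr]
  rw [hβx]
  congr 1
  rw [Finset.sum_image (fun a _ b _ h => Sum.inl_injective h)]
  refine Finset.sum_congr rfl fun i hi => ?_
  rw [beta_inl_of_mem hx hi, Finset.erase_insert_of_ne (inl_ne_of_mem hx hi),
    ← Finset.image_erase Sum.inl_injective]
  rfl

lemma sum_split_JZ {S : Finset V} (hx : x ∉ S) (f : Finset (V ⊕ Unit) → ℝ) :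
    ∑ w ∈ JZ S, betaArr α x by_ bz w * f ((JZ S).erase w)
      = bz * f (S.image Sum.inl) + ∑ i ∈ S, α i * f (JZ (S.erase i)) := by
  have h1 : JZ S = insert (Sum.inr ()) (S.image Sum.inl) := rfl
  rw [h1, Finset.sum_insert (inr_not_mem_inl S), Finset.erase_insert (inr_not_mem_inl S)]
  have hβr : betaArr α x by_ bz (Sum.inr ()) = bz := rfl
  rw [hβr]
  congr 1
  rw [Finset.sum_image (fun a _ b _ h => Sum.inl_injective h)]
  refine Finset.sum_congr rfl fun i hi => ?_
  rw [beta_inl_of_mem hx hi, Finset.erase_insert_of_ne (by simp),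
    ← Finset.image_erase Sum.inl_injective]
  rfl

lemma sum_split_JYZ {S : Finset V} (hx : x ∉ S) (f : Finset (V ⊕ Unit) → ℝ) :
    ∑ w ∈ JYZ x S, betaArr α x by_ bz w * f ((JYZ x S).erase w)
      = bz * f (JY x S) + by_ * f (JZ S) + ∑ i ∈ S, α i * f (JYZ x (S.erase i)) := by
  have h1 : JYZ x S = insert (Sum.inr ()) (JY x S) := rfl
  rw [h1, Finset.sum_insert (inr_not_mem_JY S), Finset.erase_insert (inr_not_mem_JY S)]
  have hβr : betaArr α x by_ bz (Sum.inr ()) = bz := rfl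
  rw [hβr, add_assoc]
  congr 1
  have h2 : JY x S = insert (Sum.inl x) (S.image Sum.inl) := rfl
  rw [h2, Finset.sum_insert (inlx_not_mem x hx)]
  have hβx : betaArr α x by_ bz (Sum.inl x) = by_ := by simp [betaArr]
  have hEx : (insert (Sum.inr ()) (insert (Sum.inl x) (S.image Sum.inl))).erase (Sum.inl x)
      = JZ S := by
    rw [Finset.erase_insert_of_ne (by simp), Finset.erase_insert (inlx_not_mem x hx)]
    rfl
  rw [hβx, hEx]
  congr 1
  rw [Finset.sum_image (fun a _ b _ h => Sum.inl_injective h)]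
  refine Finset.sum_congr rfl fun i hi => ?_
  rw [beta_inl_of_mem hx hi, Finset.erase_insert_of_ne (by simp),
    Finset.erase_insert_of_ne (inl_ne_of_mem hx hi),
    ← Finset.image_erase Sum.inl_injective]
  rfl

lemma sum_split_ins {S : Finset V} (hx : x ∉ S) (g : Finset V → ℝ) :
    ∑ i ∈ insert x S, α i * g ((insert x S).erase i)
      = α x * g S + ∑ i ∈ S, α i * g (insert x (S.erase i)) := by
  rw [Finset.sum_insert hx, Finset.erase_insert hx]
  congr 1
  refine Finset.sum_congr rfl fun i hi => ?_
  rw [Finset.erase_insert_of_ne]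
  rintro rfl; exact hx hi

lemma JY_ne {S : Finset V} : JY x S ≠ ∅ := by
  rw [JY]; exact (Finset.insert_nonempty _ _).ne_empty

lemma JZ_ne {S : Finset V} : JZ S ≠ ∅ := by
  rw [JZ]; exact (Finset.insert_nonempty _ _).ne_empty

lemma JYZ_ne {S : Finset V} : JYZ x S ≠ ∅ := by
  rw [JYZ]; exact (Finset.insert_nonempty _ _).ne_empty

lemma splitT (hy : 0 < by_) (hz : 0 < bz) (hyz : by_ + bz = α x) :
    ∀ S : Finset V, x ∉ S → (∀ J ⊆ insert x S, J.Nonempty → 0 < Dq G α J) →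
    Tset (Gyz G x) (betaArr α x by_ bz) (JY x S) +
      Tset (Gyz G x) (betaArr α x by_ bz) (JZ S) +
      Tset (Gyz G x) (betaArr α x by_ bz) (JYZ x S) = Tset G α (insert x S) := by
  intro S
  induction S using Finset.strongInductionOn with
  | _ S ih =>
    intro hx hDall
    have hDpos : 0 < Dq G α (insert x S) :=
      hDall _ Finset.Subset.rfl (Finset.insert_nonempty _ _)
    have hDbz : 0 < Dq G α (insert x S) + bz := by linarith
    have hDby : 0 < Dq G α (insert x S) + by_ := by linarith
    have ht : Tset (Gyz G x) (betaArr α x by_ bz) (S.image Sum.inl) = Tset G α S :=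
      TsetA hyz S hx
    have hIH : ∀ i ∈ S,
        Tset (Gyz G x) (betaArr α x by_ bz) (JY x (S.erase i)) +
          Tset (Gyz G x) (betaArr α x by_ bz) (JZ (S.erase i)) +
          Tset (Gyz G x) (betaArr α x by_ bz) (JYZ x (S.erase i))
          = Tset G α (insert x (S.erase i)) := by
      intro i hi
      refine ih (S.erase i) (Finset.erase_ssubset hi)
        (fun h => hx (Finset.mem_of_mem_erase h)) (fun J hJ hJne => hDall J ?_ hJne)
      exact hJ.trans (Finset.insert_subset_insert x (Finset.erase_subset i S))
    have hA : Tset (Gyz G x) (betaArr α x by_ bz) (JY x S)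
        = (by_ * Tset G α S +
            ∑ i ∈ S, α i * Tset (Gyz G x) (betaArr α x by_ bz) (JY x (S.erase i)))
          / (Dq G α (insert x S) + bz) := by
      rw [Tset_eq _ _ (JY_ne), sum_split_JY hx, ht, Dq_JY hyz hx]
    have hB : Tset (Gyz G x) (betaArr α x by_ bz) (JZ S)
        = (bz * Tset G α S +
            ∑ i ∈ S, α i * Tset (Gyz G x) (betaArr α x by_ bz) (JZ (S.erase i)))
          / (Dq G α (insert x S) + by_) := by
      rw [Tset_eq _ _ (JZ_ne), sum_split_JZ hx, ht, Dq_JZ hyz hx]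
    have hC : Tset (Gyz G x) (betaArr α x by_ bz) (JYZ x S)
        = (bz * Tset (Gyz G x) (betaArr α x by_ bz) (JY x S) +
            by_ * Tset (Gyz G x) (betaArr α x by_ bz) (JZ S) +
            ∑ i ∈ S, α i * Tset (Gyz G x) (betaArr α x by_ bz) (JYZ x (S.erase i)))
          / Dq G α (insert x S) := by
      rw [Tset_eq _ _ (JYZ_ne), sum_split_JYZ hx, Dq_JYZ hyz hx]
    have hR : Tset G α (insert x S)
        = (α x * Tset G α S + ∑ i ∈ S, α i * Tset G α (insert x (S.erase i)))
          / Dq G α (insert x S) := by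
      rw [Tset_eq _ _ (Finset.insert_nonempty x S).ne_empty, sum_split_ins hx]
    have hS : (∑ i ∈ S, α i * Tset (Gyz G x) (betaArr α x by_ bz) (JY x (S.erase i)))
        + (∑ i ∈ S, α i * Tset (Gyz G x) (betaArr α x by_ bz) (JZ (S.erase i)))
        + (∑ i ∈ S, α i * Tset (Gyz G x) (betaArr α x by_ bz) (JYZ x (S.erase i)))
        = ∑ i ∈ S, α i * Tset G α (insert x (S.erase i)) := by
      rw [← Finset.sum_add_distrib, ← Finset.sum_add_distrib]
      refine Finset.sum_congr rfl fun i hi => ?_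
      rw [← hIH i hi]; ring
    rw [hC, hA, hB, hR, ← hyz, ← hS]
    field_simp
    ring

end SplitMain

section SplitE

variable {G : SimpleGraph V} {α : V → ℝ} {x : V} {by_ bz : ℝ}

lemma sum_mul_add' (S : Finset V) (α : V → ℝ) (c : ℝ) (g h : V → ℝ) :
    ∑ i ∈ S, α i * (g i + c * h i)
      = (∑ i ∈ S, α i * g i) + c * ∑ i ∈ S, α i * h i := by
  rw [Finset.mul_sum, ← Finset.sum_add_distrib]
  exact Finset.sum_congr rfl fun i _ => by ring

lemma splitE (hy : 0 < by_) (hz : 0 < bz) (hyz : by_ + bz = α x) :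
    ∀ S : Finset V, x ∉ S → (∀ J ⊆ insert x S, J.Nonempty → 0 < Dq G α J) →
    Eset (Gyz G x) (betaArr α x by_ bz) (JY x S) +
      Eset (Gyz G x) (betaArr α x by_ bz) (JZ S) +
      Eset (Gyz G x) (betaArr α x by_ bz) (JYZ x S) = Eset G α (insert x S) := by
  intro S
  induction S using Finset.strongInductionOn with
  | _ S ih =>
    intro hx hDall
    have hDpos : 0 < Dq G α (insert x S) :=
      hDall _ Finset.Subset.rfl (Finset.insert_nonempty _ _)
    have hDbz : 0 < Dq G α (insert x S) + bz := by linarith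
    have hDby : 0 < Dq G α (insert x S) + by_ := by linarith
    have ht : Tset (Gyz G x) (betaArr α x by_ bz) (S.image Sum.inl) = Tset G α S :=
      TsetA hyz S hx
    have he : Eset (Gyz G x) (betaArr α x by_ bz) (S.image Sum.inl) = Eset G α S :=
      EsetA hyz S hx
    have hsub : ∀ i ∈ S, ∀ J ⊆ insert x (S.erase i), J.Nonempty → 0 < Dq G α J := by
      intro i hi J hJ hJne
      exact hDall J (hJ.trans (Finset.insert_subset_insert x (Finset.erase_subset i S))) hJne
    have hxe : ∀ i ∈ S, x ∉ S.erase i := fun i hi h => hx (Finset.mem_of_mem_erase h)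
    -- E-inductive hypothesis, summed
    have hSE : (∑ i ∈ S, α i * Eset (Gyz G x) (betaArr α x by_ bz) (JY x (S.erase i)))
        + (∑ i ∈ S, α i * Eset (Gyz G x) (betaArr α x by_ bz) (JZ (S.erase i)))
        + (∑ i ∈ S, α i * Eset (Gyz G x) (betaArr α x by_ bz) (JYZ x (S.erase i)))
        = ∑ i ∈ S, α i * Eset G α (insert x (S.erase i)) := by
      rw [← Finset.sum_add_distrib, ← Finset.sum_add_distrib]
      refine Finset.sum_congr rfl fun i hi => ?_
      rw [← ih (S.erase i) (Finset.erase_ssubset hi) (hxe i hi) (hsub i hi)]; ring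
    -- T identities, summed
    have hS : (∑ i ∈ S, α i * Tset (Gyz G x) (betaArr α x by_ bz) (JY x (S.erase i)))
        + (∑ i ∈ S, α i * Tset (Gyz G x) (betaArr α x by_ bz) (JZ (S.erase i)))
        + (∑ i ∈ S, α i * Tset (Gyz G x) (betaArr α x by_ bz) (JYZ x (S.erase i)))
        = ∑ i ∈ S, α i * Tset G α (insert x (S.erase i)) := by
      rw [← Finset.sum_add_distrib, ← Finset.sum_add_distrib]
      refine Finset.sum_congr rfl fun i hi => ?_
      rw [← splitT hy hz hyz (S.erase i) (hxe i hi) (hsub i hi)]; ring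
    have hA : Tset (Gyz G x) (betaArr α x by_ bz) (JY x S)
        = (by_ * Tset G α S +
            ∑ i ∈ S, α i * Tset (Gyz G x) (betaArr α x by_ bz) (JY x (S.erase i)))
          / (Dq G α (insert x S) + bz) := by
      rw [Tset_eq _ _ (JY_ne), sum_split_JY hx, ht, Dq_JY hyz hx]
    have hB : Tset (Gyz G x) (betaArr α x by_ bz) (JZ S)
        = (bz * Tset G α S +
            ∑ i ∈ S, α i * Tset (Gyz G x) (betaArr α x by_ bz) (JZ (S.erase i)))
          / (Dq G α (insert x S) + by_) := by
      rw [Tset_eq _ _ (JZ_ne), sum_split_JZ hx, ht, Dq_JZ hyz hx]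
    have hEA : Eset (Gyz G x) (betaArr α x by_ bz) (JY x S)
        = (by_ * (Eset G α S +
              Nq G α (insert x S) / (Dq G α (insert x S) + bz) * Tset G α S) +
            ((∑ i ∈ S, α i * Eset (Gyz G x) (betaArr α x by_ bz) (JY x (S.erase i))) +
              Nq G α (insert x S) / (Dq G α (insert x S) + bz) *
                ∑ i ∈ S, α i * Tset (Gyz G x) (betaArr α x by_ bz) (JY x (S.erase i))))
          / (Dq G α (insert x S) + bz) := by
      rw [Eset_eq _ _ (JY_ne), Nq_JY hyz, Dq_JY hyz hx,
        sum_split_JY hx (fun K => Eset (Gyz G x) (betaArr α x by_ bz) K +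
          Nq G α (insert x S) / (Dq G α (insert x S) + bz) *
            Tset (Gyz G x) (betaArr α x by_ bz) K),
        ht, he, sum_mul_add']
    have hEB : Eset (Gyz G x) (betaArr α x by_ bz) (JZ S)
        = (bz * (Eset G α S +
              Nq G α (insert x S) / (Dq G α (insert x S) + by_) * Tset G α S) +
            ((∑ i ∈ S, α i * Eset (Gyz G x) (betaArr α x by_ bz) (JZ (S.erase i))) +
              Nq G α (insert x S) / (Dq G α (insert x S) + by_) *
                ∑ i ∈ S, α i * Tset (Gyz G x) (betaArr α x by_ bz) (JZ (S.erase i))))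
          / (Dq G α (insert x S) + by_) := by
      rw [Eset_eq _ _ (JZ_ne), Nq_JZ hyz, Dq_JZ hyz hx,
        sum_split_JZ hx (fun K => Eset (Gyz G x) (betaArr α x by_ bz) K +
          Nq G α (insert x S) / (Dq G α (insert x S) + by_) *
            Tset (Gyz G x) (betaArr α x by_ bz) K),
        ht, he, sum_mul_add']
    have hEC : Eset (Gyz G x) (betaArr α x by_ bz) (JYZ x S)
        = (bz * (Eset (Gyz G x) (betaArr α x by_ bz) (JY x S) +
              Nq G α (insert x S) / Dq G α (insert x S) *
                Tset (Gyz G x) (betaArr α x by_ bz) (JY x S)) +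
            by_ * (Eset (Gyz G x) (betaArr α x by_ bz) (JZ S) +
              Nq G α (insert x S) / Dq G α (insert x S) *
                Tset (Gyz G x) (betaArr α x by_ bz) (JZ S)) +
            ((∑ i ∈ S, α i * Eset (Gyz G x) (betaArr α x by_ bz) (JYZ x (S.erase i))) +
              Nq G α (insert x S) / Dq G α (insert x S) *
                ∑ i ∈ S, α i * Tset (Gyz G x) (betaArr α x by_ bz) (JYZ x (S.erase i))))
          / Dq G α (insert x S) := by
      rw [Eset_eq _ _ (JYZ_ne), Nq_JYZ hyz, Dq_JYZ hyz hx,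
        sum_split_JYZ hx (fun K => Eset (Gyz G x) (betaArr α x by_ bz) K +
          Nq G α (insert x S) / Dq G α (insert x S) *
            Tset (Gyz G x) (betaArr α x by_ bz) K),
        sum_mul_add']
    have hRE : Eset G α (insert x S)
        = (α x * (Eset G α S +
              Nq G α (insert x S) / Dq G α (insert x S) * Tset G α S) +
            ((∑ i ∈ S, α i * Eset G α (insert x (S.erase i))) +
              Nq G α (insert x S) / Dq G α (insert x S) *
                ∑ i ∈ S, α i * Tset G α (insert x (S.erase i))))
          / Dq G α (insert x S) := by
      rw [Eset_eq _ _ (Finset.insert_nonempty x S).ne_empty,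
        sum_split_ins hx (fun K => Eset G α K +
          Nq G α (insert x S) / Dq G α (insert x S) * Tset G α K),
        sum_mul_add']
    rw [hEC, hEA, hEB, hA, hB, hRE, ← hyz, ← hSE, ← hS]
    field_simp
    ring
end SplitE

-- ===== independent set correspondence =====

section Indep

variable {G : SimpleGraph V} {α : V → ℝ} {x : V} {by_ bz : ℝ}

lemma mem_indepSets {H : SimpleGraph V} {I : Finset V} :
    I ∈ indepSets H ↔ IsIndep H I := by
  simp [indepSets]

lemma mem_indepSets' {H : SimpleGraph (V ⊕ Unit)} {I : Finset (V ⊕ Unit)} :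
    I ∈ indepSets H ↔ IsIndep H I := by
  simp [indepSets]

lemma indep_image_psi {J : Finset (V ⊕ Unit)} (h : IsIndep (Gyz G x) J) :
    IsIndep G (J.image (psiMap x)) := by
  obtain ⟨hne, hadj⟩ := h
  refine ⟨hne.image _, ?_⟩
  intro i hi j hj hGadj
  simp only [Finset.mem_image] at hi hj
  obtain ⟨a, ha, rfl⟩ := hi
  obtain ⟨b, hb, rfl⟩ := hj
  exact hadj a ha b hb hGadj

lemma indep_of_image_psi {J : Finset (V ⊕ Unit)} (hne : J.Nonempty)
    (h : IsIndep G (J.image (psiMap x))) : IsIndep (Gyz G x) J := by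
  refine ⟨hne, ?_⟩
  intro a ha b hb hadj
  exact h.2 (psiMap x a) (Finset.mem_image_of_mem _ ha)
    (psiMap x b) (Finset.mem_image_of_mem _ hb) hadj

lemma indep_subset {H : SimpleGraph V} {I J : Finset V} (hI : IsIndep H I)
    (hJI : J ⊆ I) (hne : J.Nonempty) : IsIndep H J :=
  ⟨hne, fun i hi j hj => hI.2 i (hJI hi) j (hJI hj)⟩

lemma Dq_pos_of_indep (hN : Ncond G α) {I J : Finset V} (hI : IsIndep G I)
    (hJ : J ⊆ I) (hne : J.Nonempty) : 0 < Dq G α J := by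
  have := hN J (mem_indepSets.2 (indep_subset hI hJ hne))
  rw [Dq]; linarith

lemma fiber_mem_char {J : Finset (V ⊕ Unit)} {I : Finset V}
    (hJ : IsIndep (Gyz G x) J) (hIm : J.image (psiMap x) = I) :
    (x ∉ I ∧ J = I.image Sum.inl) ∨
    (x ∈ I ∧ (J = JY x (I.erase x) ∨ J = JZ (I.erase x) ∨ J = JYZ x (I.erase x))) := by
  have hmem : ∀ i : V, i ≠ x → (Sum.inl i ∈ J ↔ i ∈ I) := by
    intro i hix
    constructor
    · intro h; rw [← hIm]; exact Finset.mem_image_of_mem _ h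
    · intro h
      rw [← hIm] at h
      simp only [Finset.mem_image] at h
      obtain ⟨w, hw, hww⟩ := h
      rcases w with a | a
      · have : a = i := hww
        subst this; exact hw
      · exact absurd hww.symm hix
  have hx1 : Sum.inl x ∈ J → x ∈ I := by
    intro h; rw [← hIm]; exact Finset.mem_image_of_mem _ h
  have hx2 : Sum.inr () ∈ J → x ∈ I := by
    intro h; rw [← hIm]; exact Finset.mem_image_of_mem _ h
  by_cases hxI : x ∈ I
  · right
    refine ⟨hxI, ?_⟩
    have hx3 : Sum.inl x ∈ J ∨ Sum.inr () ∈ J := by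
      rw [← hIm] at hxI
      simp only [Finset.mem_image] at hxI
      obtain ⟨w, hw, hww⟩ := hxI
      rcases w with a | a
      · left; have : a = x := hww; subst this; exact hw
      · right; cases a; exact hw
    have hext : ∀ i : V, i ≠ x → (Sum.inl i ∈ J ↔ Sum.inl i ∈ ((I.erase x).image Sum.inl : Finset (V ⊕ Unit))) := by
      intro i hix
      rw [hmem i hix]
      simp only [Finset.mem_image]
      constructor
      · intro h; exact ⟨i, Finset.mem_erase.2 ⟨hix, h⟩, rfl⟩
      · rintro ⟨j, hj, hjj⟩
        have : j = i := Sum.inl_injective hjj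
        subst this; exact Finset.mem_of_mem_erase hj
    by_cases h1 : Sum.inl x ∈ J <;> by_cases h2 : Sum.inr () ∈ J
    · right; right
      ext w
      rcases w with a | a
      · by_cases hax : a = x
        · rw [hax]; simp only [JYZ, JY, Finset.mem_insert]
          constructor
          · intro _; right; left; trivial
            
          · intro _; exact h1
        · rw [hext a hax]
          simp only [JYZ, JY, Finset.mem_insert]
          constructor
          · intro h; right; right; exact h
          · rintro (h | h | h)
            · exact absurd h (by simp)
            · exact absurd (Sum.inl_injective h) hax
            · exact h
      · cases a
        simp only [JYZ, Finset.mem_insert]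
        constructor
        · intro _; left; trivial
        · intro _; exact h2
    · left
      ext w
      rcases w with a | a
      · by_cases hax : a = x
        · rw [hax]; simp only [JY, Finset.mem_insert]
          constructor
          · intro _; left; trivial
          · intro _; exact h1
        · rw [hext a hax]
          simp only [JY, Finset.mem_insert]
          constructor
          · intro h; right; exact h
          · rintro (h | h)
            · exact absurd (Sum.inl_injective h) hax
            · exact h
      · cases a
        simp only [JY, Finset.mem_insert]
        constructor
        · intro h; exact absurd h h2
        · rintro (h | h)
          · exact absurd h (by simp)
          · exact absurd h (inr_not_mem_inl _)
    · right; left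
      ext w
      rcases w with a | a
      · by_cases hax : a = x
        · rw [hax]
          simp only [JZ, Finset.mem_insert]
          constructor
          · intro h; exact absurd h h1
          · rintro (h | h)
            · exact absurd h (by simp)
            · exact absurd h (inlx_not_mem x (Finset.notMem_erase x I))
        · rw [hext a hax]
          simp only [JZ, Finset.mem_insert]
          constructor
          · intro h; right; exact h
          · rintro (h | h)
            · exact absurd h (by simp)
            · exact h
      · cases a
        simp only [JZ, Finset.mem_insert]
        constructor
        · intro _; left; trivial
        · intro _; exact h2
    · exact absurd hx3 (by simp [h1, h2])
  · left
    refine ⟨hxI, ?_⟩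
    ext w
    rcases w with a | a
    · by_cases hax : a = x
      · rw [hax]
        constructor
        · intro h; exact absurd (hx1 h) hxI
        · intro h; exact absurd h (inlx_not_mem x hxI)
      · rw [hmem a hax]
        simp only [Finset.mem_image]
        constructor
        · intro h; exact ⟨a, h, rfl⟩
        · rintro ⟨j, hj, hjj⟩
          have : j = a := Sum.inl_injective hjj
          subst this; exact hj
    · cases a
      constructor
      · intro h; exact absurd (hx2 h) hxI
      · intro h; exact absurd h (inr_not_mem_inl I)

end Indep

-- ===== summation over independent sets =====

section SumDecomp

variable {G : SimpleGraph V} {α : V → ℝ} {x : V} {by_ bz : ℝ}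

lemma JY_ne_JZ {S : Finset V} (hx : x ∉ S) : JY x S ≠ JZ S := by
  intro h
  have h1 : (Sum.inr () : V ⊕ Unit) ∈ JZ S := by rw [JZ]; exact Finset.mem_insert_self _ _
  rw [← h] at h1
  exact inr_not_mem_JY S h1

lemma JY_ne_JYZ {S : Finset V} (hx : x ∉ S) : JY x S ≠ JYZ x S := by
  intro h
  have h1 : (Sum.inr () : V ⊕ Unit) ∈ JYZ x S := by rw [JYZ]; exact Finset.mem_insert_self _ _
  rw [← h] at h1
  exact inr_not_mem_JY S h1

lemma JZ_ne_JYZ {S : Finset V} (hx : x ∉ S) : JZ S ≠ JYZ x S := by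
  intro h
  have h1 : (Sum.inl x : V ⊕ Unit) ∈ JYZ x S := by
    rw [JYZ, JY]
    exact Finset.mem_insert_of_mem (Finset.mem_insert_self _ _)
  rw [← h, JZ, Finset.mem_insert] at h1
  rcases h1 with h1 | h1
  · exact absurd h1 (by simp)
  · exact inlx_not_mem x hx h1

lemma sum_indep_decomp (F : Finset (V ⊕ Unit) → ℝ) (Fv : Finset V → ℝ)
    (h1 : ∀ I : Finset V, IsIndep G I → x ∉ I → F (I.image Sum.inl) = Fv I)
    (h2 : ∀ I : Finset V, IsIndep G I → x ∈ I →
        F (JY x (I.erase x)) + F (JZ (I.erase x)) + F (JYZ x (I.erase x)) = Fv I) :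
    ∑ J ∈ indepSets (Gyz G x), F J = ∑ I ∈ indepSets G, Fv I := by
  have hmaps : ∀ J ∈ indepSets (Gyz G x), J.image (psiMap x) ∈ indepSets G := fun J hJ =>
    mem_indepSets.2 (indep_image_psi (mem_indepSets'.1 hJ))
  rw [← Finset.sum_fiberwise_of_maps_to hmaps F]
  refine Finset.sum_congr rfl fun I hI => ?_
  have hIind : IsIndep G I := mem_indepSets.1 hI
  by_cases hx : x ∈ I
  · have hxe : x ∉ I.erase x := Finset.notMem_erase x I
    have hfiber : (indepSets (Gyz G x)).filter (fun J => J.image (psiMap x) = I)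
        = {JY x (I.erase x), JZ (I.erase x), JYZ x (I.erase x)} := by
      ext J
      simp only [Finset.mem_filter, Finset.mem_insert, Finset.mem_singleton]
      constructor
      · rintro ⟨hJ, hIm⟩
        rcases fiber_mem_char (mem_indepSets'.1 hJ) hIm with ⟨hxn, _⟩ | ⟨_, h⟩
        · exact absurd hx hxn
        · exact h
      · intro h
        rcases h with rfl | rfl | rfl
        · refine ⟨mem_indepSets'.2 (indep_of_image_psi ?_ ?_), ?_⟩
          · rw [JY]; exact Finset.insert_nonempty _ _
          · rw [image_psi_JY, Finset.insert_erase hx]; exact hIind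
          · rw [image_psi_JY, Finset.insert_erase hx]
        · refine ⟨mem_indepSets'.2 (indep_of_image_psi ?_ ?_), ?_⟩
          · rw [JZ]; exact Finset.insert_nonempty _ _
          · rw [image_psi_JZ, Finset.insert_erase hx]; exact hIind
          · rw [image_psi_JZ, Finset.insert_erase hx]
        · refine ⟨mem_indepSets'.2 (indep_of_image_psi ?_ ?_), ?_⟩
          · rw [JYZ]; exact Finset.insert_nonempty _ _
          · rw [image_psi_JYZ, Finset.insert_erase hx]; exact hIind
          · rw [image_psi_JYZ, Finset.insert_erase hx]
    rw [hfiber, Finset.sum_insert, Finset.sum_insert, Finset.sum_singleton, ← add_assoc]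
    · exact h2 I hIind hx
    · simp only [Finset.mem_singleton]
      exact JZ_ne_JYZ hxe
    · simp only [Finset.mem_insert, Finset.mem_singleton]
      push_neg
      exact ⟨JY_ne_JZ hxe, JY_ne_JYZ hxe⟩
  · have hfiber : (indepSets (Gyz G x)).filter (fun J => J.image (psiMap x) = I)
        = {I.image Sum.inl} := by
      ext J
      simp only [Finset.mem_filter, Finset.mem_singleton]
      constructor
      · rintro ⟨hJ, hIm⟩
        rcases fiber_mem_char (mem_indepSets'.1 hJ) hIm with ⟨_, h⟩ | ⟨hxn, _⟩
        · exact h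
        · exact absurd hxn hx
      · rintro rfl
        refine ⟨mem_indepSets'.2 (indep_of_image_psi ?_ ?_), ?_⟩
        · exact hIind.1.image _
        · rw [image_psi_image_inl]; exact hIind
        · rw [image_psi_image_inl]
    rw [hfiber, Finset.sum_singleton]
    exact h1 I hIind hx

lemma meanQ_decomp (hN : Ncond G α) (hy : 0 < by_) (hz : 0 < bz) (hyz : by_ + bz = α x) :
    meanQ (Gyz G x) (betaArr α x by_ bz) = meanQ G α := by
  have hDpos : ∀ I : Finset V, IsIndep G I → x ∈ I →
      ∀ J ⊆ insert x (I.erase x), J.Nonempty → 0 < Dq G α J := by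
    intro I hI hx J hJ hne
    rw [Finset.insert_erase hx] at hJ
    exact Dq_pos_of_indep hN hI hJ hne
  have hT : ∑ J ∈ indepSets (Gyz G x), TI (Gyz G x) (betaArr α x by_ bz) J
      = ∑ I ∈ indepSets G, TI G α I := by
    rw [Finset.sum_congr rfl fun J _ => TI_eq_Tset (Gyz G x) (betaArr α x by_ bz) J,
      Finset.sum_congr rfl fun I _ => TI_eq_Tset G α I]
    refine sum_indep_decomp (Tset (Gyz G x) (betaArr α x by_ bz)) (Tset G α)
      (fun I hI hx => TsetA hyz I hx) (fun I hI hx => ?_)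
    have := splitT hy hz hyz (I.erase x) (Finset.notMem_erase x I) (hDpos I hI hx)
    rwa [Finset.insert_erase hx] at this
  have hE : ∑ J ∈ indepSets (Gyz G x), EI (Gyz G x) (betaArr α x by_ bz) J
      = ∑ I ∈ indepSets G, EI G α I := by
    rw [Finset.sum_congr rfl fun J _ => EI_eq_Eset (Gyz G x) (betaArr α x by_ bz) J,
      Finset.sum_congr rfl fun I _ => EI_eq_Eset G α I]
    refine sum_indep_decomp (Eset (Gyz G x) (betaArr α x by_ bz)) (Eset G α)
      (fun I hI hx => EsetA hyz I hx) (fun I hI hx => ?_)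
    have := splitE hy hz hyz (I.erase x) (Finset.notMem_erase x I) (hDpos I hI hx)
    rwa [Finset.insert_erase hx] at this
  rw [meanQ, meanQ, hT, hE]

end SumDecomp

-- ===== final assembly =====

section Final

variable {G : SimpleGraph V} {α : V → ℝ} {x : V} {by_ bz : ℝ}

lemma Ncond_addEdge (hpos : ∀ i, 0 < α i) (hN : Ncond G α) (u v : V) :
    Ncond (addEdge G u v) α := by
  intro I hI
  have hind : IsIndep (addEdge G u v) I := mem_indepSets.1 hI
  have hindG : IsIndep G I := ⟨hind.1, fun i hi j hj hadj => hind.2 i hi j hj (by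
    rw [addEdge]; exact (SimpleGraph.sup_adj _ _ _ _).2 (Or.inl hadj))⟩
  have h1 := hN I (mem_indepSets.2 hindG)
  have h2 : nbr G I ⊆ nbr (addEdge G u v) I := by
    intro j hj
    simp only [nbr, Finset.mem_filter, Finset.mem_univ, true_and] at hj ⊢
    obtain ⟨i, hi, hadj⟩ := hj
    exact ⟨i, hi, by rw [addEdge]; exact (SimpleGraph.sup_adj _ _ _ _).2 (Or.inl hadj)⟩
  have h3 : aSum α (nbr G I) ≤ aSum α (nbr (addEdge G u v) I) := by
    rw [aSum, aSum]
    exact Finset.sum_le_sum_of_subset_of_nonneg h2 (fun i _ _ => (hpos i).le)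
  linarith

lemma psi_eq_of_ne {w : V ⊕ Unit} {c : V} (hc : c ≠ x) (h : psiMap x w = c) :
    w = Sum.inl c := by
  rcases w with a | a
  · have : a = c := h
    rw [this]
  · exact absurd h.symm hc

lemma addEdge_Gyz_comm (u v : V) (hux : u ≠ x) (hvx : v ≠ x) (huv : u ≠ v) :
    addEdge (Gyz G x) (Sum.inl u) (Sum.inl v) = Gyz (addEdge G u v) x := by
  ext a b
  simp only [addEdge, SimpleGraph.sup_adj, SimpleGraph.fromEdgeSet_adj,
    Set.mem_singleton_iff, Gyz, SimpleGraph.comap_adj, Sym2.eq_iff]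
  apply or_congr Iff.rfl
  constructor
  · rintro ⟨(⟨rfl, rfl⟩ | ⟨rfl, rfl⟩), hne⟩
    · exact ⟨Or.inl ⟨rfl, rfl⟩, by simpa [psiMap] using huv⟩
    · exact ⟨Or.inr ⟨rfl, rfl⟩, by simpa [psiMap] using huv.symm⟩
  · rintro ⟨(⟨h1, h2⟩ | ⟨h1, h2⟩), hne⟩
    · rw [psi_eq_of_ne hux h1, psi_eq_of_ne hvx h2]
      exact ⟨Or.inl ⟨rfl, rfl⟩, by simpa using huv⟩
    · rw [psi_eq_of_ne hvx h1, psi_eq_of_ne hux h2]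
      exact ⟨Or.inr ⟨rfl, rfl⟩, by simpa using huv.symm⟩

end Final


theorem stmt16 {V : Type} [Fintype V] [DecidableEq V] (G : SimpleGraph V) (α : V → ℝ)
    (hpos : ∀ i, 0 < α i) (hN : Ncond G α) (x : V) (by_ bz : ℝ)
    (hy : 0 < by_) (hz : 0 < bz) (hyz : by_ + bz = α x)
    (u v : V) (huv : u ≠ v) (hnadj : ¬ G.Adj u v) (hux : u ≠ x) (hvx : v ≠ x)
    (hpar : meanQ G α < meanQ (addEdge G u v) α) :
    meanQ (Gyz G x) (betaArr α x by_ bz) <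
      meanQ (addEdge (Gyz G x) (Sum.inl u) (Sum.inl v)) (betaArr α x by_ bz) := by
  have h1 : meanQ (Gyz G x) (betaArr α x by_ bz) = meanQ G α :=
    meanQ_decomp hN hy hz hyz
  have hN2 : Ncond (addEdge G u v) α := Ncond_addEdge hpos hN u v
  have h2 : meanQ (Gyz (addEdge G u v) x) (betaArr α x by_ bz) = meanQ (addEdge G u v) α :=
    meanQ_decomp hN2 hy hz hyz
  rw [h1, addEdge_Gyz_comm u v hux hvx huv, h2]
  exact hpar

end
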